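/- For every integer e ≥ 3, the 2-adic valuation of f(2^e - 1) is at least 2e, where f(n) = ∑_{k=0}^{n} C(n,k)^{-1}. -/

import Mathlib

def f (n : ℕ) : ℚ := ∑ k ∈ Finset.range (n + 1), ((n.choose k : ℚ))⁻¹

open Finset

def S (m : ℕ) : ℚ := ∑ k ∈ Finset.Icc 1 m, 2 ^ k / k

def vb (c : ℤ) (q : ℚ) : Prop := q = 0 ∨ c ≤ padicValRat 2 q





lemma S_succ (m : ℕ) : S (m + 1) = S m + 2 ^ (m + 1) / (m + 1) := by
  rw [S, Finset.sum_Icc_succ_top (by omega : 1 ≤ m + 1)]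
  push_cast; ring_nf; simp only [S]; ring_nf

lemma choose_pair (n k : ℕ) (hk : k ≤ n) :
    ((((n+1).choose k : ℚ))⁻¹ + (((n+1).choose (k+1) : ℚ))⁻¹)
      = (n+2)/(n+1) * ((n.choose k : ℚ))⁻¹ := by
  have h1 : ((n+1).choose k : ℚ) * ((n:ℚ) + 1 - k) = (n.choose k : ℚ) * ((n:ℚ)+1) := by
    have := Nat.choose_mul_succ_eq n k
    have h2 := congrArg (Nat.cast : ℕ → ℚ) this
    push_cast [Nat.cast_sub (by omega : k ≤ n + 1)] at h2
    linarith
  have h2 : ((n+1).choose (k+1) : ℚ) * ((k:ℚ) + 1) = (n.choose k : ℚ) * ((n:ℚ)+1) := by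
    have := Nat.add_one_mul_choose_eq n k
    have h3 := congrArg (Nat.cast : ℕ → ℚ) this
    push_cast at h3
    linarith
  have hc : (n.choose k : ℚ) ≠ 0 := by
    exact_mod_cast Nat.choose_pos hk |>.ne'
  have ha : (((n+1).choose k : ℚ)) ≠ 0 := by
    exact_mod_cast (Nat.choose_pos (by omega : k ≤ n+1)).ne'
  have hb : (((n+1).choose (k+1) : ℚ)) ≠ 0 := by
    exact_mod_cast (Nat.choose_pos (by omega : k+1 ≤ n+1)).ne'
  have hn1 : ((n:ℚ)+1) ≠ 0 := by positivity
  field_simp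
  nlinarith [h1, h2]

lemma f_rec (n : ℕ) : f (n+1) = (n+2)/(2*(n+1)) * f n + 1 := by
  have key : ∑ k ∈ range (n+1), ((((n+1).choose k : ℚ))⁻¹ + (((n+1).choose (k+1) : ℚ))⁻¹)
      = (n+2)/(n+1) * f n := by
    rw [f, Finset.mul_sum]
    exact Finset.sum_congr rfl fun k hk => choose_pair n k (by
      simpa using Nat.lt_succ_iff.mp (Finset.mem_range.mp hk))
  rw [Finset.sum_add_distrib] at key
  have e1 : ∑ k ∈ range (n+1), (((n+1).choose k : ℚ))⁻¹ = f (n+1) - 1 := by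
    rw [f]
    rw [Finset.sum_range_succ (fun k => (((n+1).choose k : ℚ))⁻¹) (n+1)]
    simp
  have e2 : ∑ k ∈ range (n+1), (((n+1).choose (k+1) : ℚ))⁻¹ = f (n+1) - 1 := by
    have h := Finset.sum_range_succ' (fun k => (((n+1).choose k : ℚ))⁻¹) (n+1)
    rw [f, h]
    simp
  rw [e1, e2] at key
  have hn1 : ((n:ℚ)+1) ≠ 0 := by positivity
  field_simp at key ⊢
  linarith

lemma f_eq_S (n : ℕ) : f n = (n+1) / 2^(n+1) * S (n+1) := by
  induction n with
  | zero => norm_num [f, S]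
  | succ n ih =>
    rw [f_rec, ih, S_succ (n+1)]
    have h1 : ((n:ℚ)+1) ≠ 0 := by positivity
    have h2 : ((n:ℚ)+2) ≠ 0 := by positivity
    have h3 : (2:ℚ)^(n+1) ≠ 0 := by positivity
    push_cast
    field_simp
    ring



-- A m = ∑_{k=0}^{m} (-1)^(m-k) C(k, m-k) 4^k  (reflected Fibonacci-polynomial sum)
def A (m : ℕ) : ℚ := ∑ k ∈ range (m+1), (-1)^(m-k) * (k.choose (m-k)) * 4^k

lemma A_zero : A 0 = 1 := by simp [A]
lemma A_one : A 1 = 4 := by simp [A, Finset.sum_range_succ]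

lemma A_rec (m : ℕ) : A (m+2) = 4 * A (m+1) - 4 * A m := by
  have h0 : A (m+2) = ∑ k ∈ range (m+2),
      (-1:ℚ)^(m+2-(k+1)) * ((k+1).choose (m+2-(k+1))) * 4^(k+1) := by
    rw [A, Finset.sum_range_succ']
    simp
  rw [h0, Finset.sum_range_succ]
  have h1 : ∀ k ∈ range (m+1),
      (-1:ℚ)^(m+2-(k+1)) * ((k+1).choose (m+2-(k+1))) * 4^(k+1)
      = 4 * ((-1)^(m+1-k) * (k.choose (m+1-k)) * 4^k)
        + (-4) * ((-1)^(m-k) * (k.choose (m-k)) * 4^k) := by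
    intro k hk
    have hk' : k ≤ m := by simpa [Nat.lt_succ_iff] using hk
    have e1 : m + 2 - (k+1) = (m - k) + 1 := by omega
    have e2 : m + 1 - k = (m - k) + 1 := by omega
    rw [e1, e2, Nat.choose_succ_succ]
    push_cast
    ring
  rw [Finset.sum_congr rfl h1, Finset.sum_add_distrib]
  have e3 : A (m+1) = (∑ k ∈ range (m+1), ((-1:ℚ)^(m+1-k) * (k.choose (m+1-k)) * 4^k)) + 4^(m+1) := by
    rw [A, Finset.sum_range_succ]
    simp
  have e4 : A m = ∑ k ∈ range (m+1), ((-1:ℚ)^(m-k) * (k.choose (m-k)) * 4^k) := by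
    rw [A]
  rw [← Finset.mul_sum, ← Finset.mul_sum, ← e4]
  have e5 : (∑ k ∈ range (m+1), ((-1:ℚ)^(m+1-k) * (k.choose (m+1-k)) * 4^k)) = A (m+1) - 4^(m+1) := by
    rw [e3]; ring
  rw [e5]
  simp
  ring

lemma A_val (m : ℕ) : A m = (m+1) * 2^m := by
  induction m using Nat.twoStepInduction with
  | zero => simpa using A_zero
  | one => rw [A_one]; norm_num
  | more m ih1 ih2 =>
    rw [A_rec, ih1, ih2]
    push_cast
    ring

lemma sum_Icc_one (h : ℕ → ℚ) (n : ℕ) : ∑ k ∈ Icc 1 n, h k = ∑ k ∈ range n, h (k+1) := by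
  rw [← Finset.Ico_add_one_right_eq_Icc, Finset.sum_Ico_eq_sum_range]
  simp [add_comm]

-- (C1): for j ≥ 1, ∑_{k=1}^{j} (-1)^(j-k) C(k, j-k) 4^k / k = 2^(j+1)/j
lemma C1 (j : ℕ) (hj : 1 ≤ j) :
    ∑ k ∈ Icc 1 j, (-1:ℚ)^(j-k) * (k.choose (j-k)) * 4^k / k = 2^(j+1)/j := by
  rcases eq_or_lt_of_le hj with h1 | h2
  · simp [← h1]
    norm_num
  obtain ⟨m, rfl⟩ : ∃ m, j = m + 2 := ⟨j - 2, by omega⟩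
  have hjQ : ((m:ℚ)+2) ≠ 0 := by positivity
  -- multiply by j
  have key : ((m+2 : ℕ):ℚ) * (∑ k ∈ Icc 1 (m+2), (-1:ℚ)^(m+2-k) * (k.choose (m+2-k)) * 4^k / k)
      = A (m+2) - 4 * A m := by
    rw [Finset.mul_sum]
    have per : ∀ k ∈ Icc 1 (m+1),
        ((m+2 : ℕ):ℚ) * ((-1:ℚ)^(m+2-k) * (k.choose (m+2-k)) * 4^k / k)
        = (-1:ℚ)^(m+2-k) * (k.choose (m+2-k)) * 4^k
          + (-1:ℚ)^(m+2-k) * ((k-1).choose (m+1-k)) * 4^k := by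
      intro k hk
      obtain ⟨hk1, hk2⟩ := Finset.mem_Icc.mp hk
      have hc : k * ((k-1).choose (m+1-k)) = (k.choose (m+2-k)) * (m+2-k) := by
        have h := Nat.add_one_mul_choose_eq (k-1) (m+1-k)
        have e1 : k-1+1 = k := by omega
        have e2 : m+1-k+1 = m+2-k := by omega
        rw [e1, e2] at h
        exact h
      have hcQ : (k:ℚ) * ((k-1).choose (m+1-k) : ℚ) = (k.choose (m+2-k) : ℚ) * ((m:ℚ)+2-k) := by
        have := congrArg (Nat.cast : ℕ → ℚ) hc
        push_cast [Nat.cast_sub (by omega : k ≤ m+2)] at this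
        convert this using 2 <;> push_cast <;> ring
      have hkQ : (k:ℚ) ≠ 0 := by
        exact_mod_cast (by omega : k ≠ 0)
      rw [mul_div_assoc', div_eq_iff hkQ]
      push_cast
      linear_combination (-((-1:ℚ)^(m+2-k) * 4^k)) * hcQ
    rw [Finset.sum_Icc_succ_top (by omega : 1 ≤ m+2)]
    rw [Finset.sum_congr rfl per, Finset.sum_add_distrib]
    -- top term k = m+2
    have top : ((m+2:ℕ):ℚ) * ((-1:ℚ)^(m+2-(m+1+1)) * (((m+1+1).choose (m+2-(m+1+1))):ℚ) * 4^(m+1+1) / ((m+1+1 : ℕ):ℚ))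
        = 4^(m+2) := by
      norm_num
      field_simp
      ring
    rw [top]
    -- Σ1 = A (m+2) - 4^(m+2)
    have e1 : ∑ k ∈ Icc 1 (m+1), (-1:ℚ)^(m+2-k) * (k.choose (m+2-k)) * 4^k
        = A (m+2) - 4^(m+2) := by
      have expand : A (m+2) = ∑ k ∈ range (m+3), (-1:ℚ)^(m+2-k) * (k.choose (m+2-k)) * 4^k := rfl
      have h0 : ∑ k ∈ range (m+3), (-1:ℚ)^(m+2-k) * (k.choose (m+2-k)) * 4^k
          = (∑ k ∈ range (m+2), (-1:ℚ)^(m+2-k) * (k.choose (m+2-k)) * 4^k) + 4^(m+2) := by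
        rw [Finset.sum_range_succ]
        simp
      have h1 : ∑ k ∈ range (m+2), (-1:ℚ)^(m+2-k) * (k.choose (m+2-k)) * 4^k
          = ∑ k ∈ Icc 1 (m+1), (-1:ℚ)^(m+2-k) * (k.choose (m+2-k)) * 4^k := by
        rw [sum_Icc_one]
        rw [Finset.sum_range_succ']
        simp [Nat.choose_eq_zero_of_lt (by omega : 0 < m+2)]
      rw [expand, h0, h1]
      ring
    -- Σ2 = -4 A m
    have e2 : ∑ k ∈ Icc 1 (m+1), (-1:ℚ)^(m+2-k) * (((k-1).choose (m+1-k)):ℚ) * 4^k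
        = -4 * A m := by
      rw [sum_Icc_one]
      have per2 : ∀ t ∈ range (m+1),
          (-1:ℚ)^(m+2-(t+1)) * (((t+1-1).choose (m+1-(t+1))):ℚ) * 4^(t+1)
          = -4 * ((-1:ℚ)^(m-t) * ((t.choose (m-t)):ℚ) * 4^t) := by
        intro t ht
        have ht' : t ≤ m := by simpa [Nat.lt_succ_iff] using ht
        have e4 : m+2-(t+1) = (m-t)+1 := by omega
        have e5 : t+1-1 = t := by omega
        have e6 : m+1-(t+1) = m-t := by omega
        rw [e4, e5, e6]
        ring
      rw [Finset.sum_congr rfl per2, ← Finset.mul_sum]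
      rfl
    rw [e1, e2]
    ring
  have lhs_eq : (∑ k ∈ Icc 1 (m+2), (-1:ℚ)^(m+2-k) * (k.choose (m+2-k)) * 4^k / k)
      = (A (m+2) - 4 * A m) / ((m:ℚ)+2) := by
    rw [← key]
    push_cast
    field_simp
  rw [lhs_eq, A_val, A_val]
  push_cast
  field_simp
  ring



lemma alt_partial (k : ℕ) (hk : 1 ≤ k) (t : ℕ) :
    ∑ i ∈ range (t+1), (-1:ℚ)^i * (k.choose i) = (-1)^t * ((k-1).choose t) := by
  induction t with
  | zero => simp
  | succ t ih =>
    rw [Finset.sum_range_succ, ih]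
    have h : k.choose (t+1) = (k-1).choose t + (k-1).choose (t+1) := by
      have h2 := Nat.choose_succ_succ (k-1) t
      simp only [Nat.succ_eq_add_one] at h2
      rwa [(by omega : k - 1 + 1 = k)] at h2
    rw [h]
    push_cast
    ring

lemma neg_one_pow_sub (n k : ℕ) (hk : k ≤ n) (hn : Even n) :
    (-1:ℚ)^(n-k) = (-1)^k := by
  rcases Nat.even_or_odd k with he | ho
  · have h : Even (n-k) := (Nat.even_sub hk).mpr (iff_of_true hn he)
    rw [Even.neg_one_pow h, Even.neg_one_pow he]
  · have h : Odd (n-k) := by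
      rw [← Nat.not_even_iff_odd]
      intro hc
      exact (Nat.not_even_iff_odd.mpr ho) (((Nat.even_sub hk).mp hc).mp hn)
    rw [Odd.neg_one_pow h, Odd.neg_one_pow ho]

lemma star (n : ℕ) (hn : 1 ≤ n) :
    2 * S (2*n) = ∑ k ∈ Icc (n+1) (2*n),
      (-1:ℚ)^k * (((k-1).choose (2*n-k)):ℚ) * 4^k / k := by
  have h1 : 2 * S (2*n) = ∑ j ∈ Icc 1 (2*n), (2:ℚ)^(j+1)/(j:ℚ) := by
    rw [S, Finset.mul_sum]
    refine Finset.sum_congr rfl fun j hj => ?_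
    rw [pow_succ]
    ring
  rw [h1]
  have h2 : ∑ j ∈ Icc 1 (2*n), (2:ℚ)^(j+1)/(j:ℚ)
      = ∑ j ∈ Icc 1 (2*n), ∑ k ∈ Icc 1 j, (-1:ℚ)^(j-k) * (k.choose (j-k)) * 4^k / k :=
    Finset.sum_congr rfl fun j hj => (C1 j (Finset.mem_Icc.mp hj).1).symm
  rw [h2]
  have h3 : ∑ j ∈ Icc 1 (2*n), ∑ k ∈ Icc 1 j, (-1:ℚ)^(j-k) * (k.choose (j-k)) * 4^k / k
      = ∑ k ∈ Icc 1 (2*n), ∑ j ∈ Icc k (2*n), (-1:ℚ)^(j-k) * (k.choose (j-k)) * 4^k / k := by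
    simp only [← Finset.Ico_add_one_right_eq_Icc]
    exact (Finset.sum_Ico_Ico_comm 1 (2*n+1)
      (fun k j => (-1:ℚ)^(j-k) * (k.choose (j-k)) * 4^k / k)).symm
  rw [h3]
  have h4 : ∀ k ∈ Icc 1 (2*n),
      ∑ j ∈ Icc k (2*n), (-1:ℚ)^(j-k) * (k.choose (j-k)) * 4^k / k
      = (-1:ℚ)^k * (((k-1).choose (2*n-k)):ℚ) * 4^k / k := by
    intro k hk
    obtain ⟨hk1, hk2⟩ := Finset.mem_Icc.mp hk
    rw [← Finset.Ico_add_one_right_eq_Icc, Finset.sum_Ico_eq_sum_range]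
    have e0 : 2*n + 1 - k = (2*n - k) + 1 := by omega
    rw [e0]
    have e1 : ∀ i ∈ range ((2*n-k)+1),
        (-1:ℚ)^(k+i-k) * (k.choose (k+i-k)) * 4^k / k
        = ((-1:ℚ)^i * (k.choose i)) * (4^k / k) := by
      intro i hi
      rw [Nat.add_sub_cancel_left]
      ring
    rw [Finset.sum_congr rfl e1, ← Finset.sum_mul, alt_partial k hk1,
      neg_one_pow_sub (2*n) k hk2 (even_two_mul n)]
    ring
  rw [Finset.sum_congr rfl h4]
  symm
  apply Finset.sum_subset
  · intro x hx
    simp only [Finset.mem_Icc] at *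
    omega
  · intro x hx hnx
    simp only [Finset.mem_Icc] at hx hnx
    have : (x-1) < 2*n - x := by omega
    rw [Nat.choose_eq_zero_of_lt this]
    simp



lemma vb_zero (c : ℤ) : vb c 0 := Or.inl rfl

lemma vb_mono {c c' : ℤ} {q : ℚ} (h : vb c q) (hc : c' ≤ c) : vb c' q := by
  rcases h with h | h
  · exact Or.inl h
  · exact Or.inr (le_trans hc h)

lemma vb_add {c : ℤ} {q r : ℚ} (hq : vb c q) (hr : vb c r) : vb c (q + r) := by
  rcases hq with hq | hq
  · simpa [hq] using hr
  rcases hr with hr | hr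
  · rw [hr, add_zero]; exact Or.inr hq
  by_cases h : q + r = 0
  · exact Or.inl h
  · exact Or.inr (le_trans (le_min hq hr) (padicValRat.min_le_padicValRat_add (p := 2) h))

lemma vb_neg {c : ℤ} {q : ℚ} (hq : vb c q) : vb c (-q) := by
  rcases hq with hq | hq
  · exact Or.inl (by simp [hq])
  · exact Or.inr (by rwa [padicValRat.neg])

lemma vb_sub {c : ℤ} {q r : ℚ} (hq : vb c q) (hr : vb c r) : vb c (q - r) := by
  rw [sub_eq_add_neg]; exact vb_add hq (vb_neg hr)

lemma vb_sum {c : ℤ} {s : Finset ℕ} {g : ℕ → ℚ} (h : ∀ x ∈ s, vb c (g x)) :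
    vb c (∑ x ∈ s, g x) := by
  classical
  induction s using Finset.cons_induction with
  | empty => simpa using vb_zero c
  | cons a s ha ih =>
    rw [Finset.sum_cons]
    exact vb_add (h a (Finset.mem_cons_self a s)) (ih fun x hx => h x (Finset.mem_cons.mpr (Or.inr hx)))

lemma val_two_pow (j : ℕ) : padicValRat 2 ((2:ℚ)^j) = j := by
  have h2 : ((2:ℕ):ℚ) = (2:ℚ) := by norm_num
  rw [padicValRat.pow, ← h2, padicValRat.self (by norm_num)]
  simp

lemma val_nat_cast (k : ℕ) : padicValRat 2 (k : ℚ) = padicValNat 2 k := padicValRat.of_nat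

lemma vb_mul_val {c d : ℤ} {q r : ℚ} (hq : vb c q) (hr : r ≠ 0)
    (hvr : padicValRat 2 r = d) : vb (c + d) (q * r) := by
  by_cases hq0 : q = 0
  · exact Or.inl (by simp [hq0])
  rcases hq with hq | hq
  · exact absurd hq hq0
  · exact Or.inr (by rw [padicValRat.mul hq0 hr, hvr]; omega)

-- valuation of k : ℕ with 1 ≤ k < 2^m is ≤ m-1
lemma padicValNat_lt_of_lt {k m : ℕ} (hk : 1 ≤ k) (hkm : k < 2^m) :
    padicValNat 2 k < m := by
  by_contra h
  push_neg at h
  have h1 : (2:ℕ)^m ∣ 2 ^ padicValNat 2 k := pow_dvd_pow 2 h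
  have h2 : (2:ℕ)^m ∣ k := h1.trans pow_padicValNat_dvd
  have := Nat.le_of_dvd (by omega) h2
  omega

-- 2 * padicValNat 2 r ≤ r for r ≥ 1
lemma two_mul_val_le {r : ℕ} (hr : 1 ≤ r) : 2 * padicValNat 2 r ≤ r := by
  set v := padicValNat 2 r with hv
  have h2 : 2^v ≤ r := Nat.le_of_dvd (by omega) pow_padicValNat_dvd
  have h3 : 2 * v ≤ 2^v := by
    rcases Nat.eq_zero_or_pos v with h | h
    · simp [h]
    · calc 2 * v ≤ 2 * 2^(v-1) := by
            have := Nat.lt_two_pow_self (n := v-1)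
            omega
        _ = 2^v := by
            rw [← pow_succ']
            congr 1
            omega
  omega




lemma val_neg_one_pow (k : ℕ) : padicValRat 2 ((-1:ℚ)^k) = 0 := by
  rcases Nat.even_or_odd k with h | h
  · rw [h.neg_one_pow]; exact padicValRat.one
  · rw [h.neg_one_pow, padicValRat.neg]; exact padicValRat.one

lemma val_four_pow (k : ℕ) : padicValRat 2 ((4:ℚ)^k) = 2*k := by
  rw [show (4:ℚ) = 2^2 by norm_num, ← pow_mul]
  rw [val_two_pow]
  push_cast; ring

lemma star_bound (n m : ℕ) (hn : 1 ≤ n) (hm : 2*n < 2^m) :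
    vb (2*(n:ℤ) + 2 - m) (S (2*n)) := by
  have h2 : vb (2*(n:ℤ) + 3 - m) (2 * S (2*n)) := by
    rw [star n hn]
    apply vb_sum
    intro k hk
    obtain ⟨hk1, hk2⟩ := Finset.mem_Icc.mp hk
    by_cases hC : (((k-1).choose (2*n-k)):ℚ) = 0
    · rw [hC]
      simpa using vb_zero _
    · right
      have hkQ : (k:ℚ) ≠ 0 := Nat.cast_ne_zero.mpr (by omega)
      have h4 : ((4:ℚ)^k) ≠ 0 := by positivity
      have hs : ((-1:ℚ)^k) ≠ 0 := by
        apply pow_ne_zero; norm_num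
      rw [padicValRat.div (by exact mul_ne_zero (mul_ne_zero hs hC) h4) hkQ,
        padicValRat.mul (mul_ne_zero hs hC) h4,
        padicValRat.mul hs hC, val_neg_one_pow, val_four_pow, val_nat_cast, val_nat_cast]
      have hvC : (0:ℤ) ≤ padicValNat 2 ((k-1).choose (2*n-k)) := Int.ofNat_nonneg _
      have hvk : padicValNat 2 k < m := padicValNat_lt_of_lt (by omega) (by omega)
      have hvk' : (padicValNat 2 k : ℤ) < m := by exact_mod_cast hvk
      have hk1' : (n:ℤ) + 1 ≤ k := by exact_mod_cast hk1
      omega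
  by_cases hS : S (2*n) = 0
  · exact Or.inl hS
  rcases h2 with h | h
  · exact Or.inl (by simpa using h)
  · right
    rw [padicValRat.mul (by norm_num) hS] at h
    have hv2 : padicValRat 2 (2:ℚ) = 1 := by
      have := val_two_pow 1
      simpa using this
    rw [hv2] at h
    omega

lemma S_top (m : ℕ) (hm : 1 ≤ m) : S m = S (m-1) + 2^m/(m:ℚ) := by
  obtain ⟨m', rfl⟩ : ∃ m', m = m' + 1 := ⟨m - 1, by omega⟩
  rw [S, Finset.sum_Icc_succ_top (by omega : 1 ≤ m'+1)]
  simp [S]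

-- the half tail decomposition
lemma half_tail (N : ℕ) (hN : 1 ≤ N) :
    ∑ j ∈ Icc (N+1) (2*N), (2:ℚ)^j/(j:ℚ)
      = 2^N * (S (N-1) - (N:ℚ) * (∑ r ∈ Icc 1 (N-1), 2^r/((r:ℚ) * ((N:ℚ)+r)))
          + 2^(N-1)/(N:ℚ)) := by
  obtain ⟨M, rfl⟩ : ∃ M, N = M+1 := ⟨N - 1, by omega⟩
  simp only [Nat.add_sub_cancel]
  have reindex : ∑ j ∈ Icc ((M+1)+1) (2*(M+1)), (2:ℚ)^j/(j:ℚ)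
      = ∑ r ∈ Icc 1 (M+1), (2:ℚ)^((M+1)+r)/(((M+1):ℚ)+r) := by
    rw [← Finset.Ico_add_one_right_eq_Icc, Finset.sum_Ico_eq_sum_range,
      ← Finset.Ico_add_one_right_eq_Icc, Finset.sum_Ico_eq_sum_range]
    have e1 : 2*(M+1) + 1 - ((M+1)+1) = M+1 := by omega
    have e2 : M + 1 + 1 - 1 = M+1 := by omega
    rw [e1, e2]
    refine Finset.sum_congr rfl fun i hi => ?_
    have e3 : (M+1) + 1 + i = (M+1) + (1 + i) := by omega
    rw [e3]
    push_cast
    ring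
  rw [reindex, Finset.sum_Icc_succ_top (by omega : 1 ≤ M+1), S]
  have per : ∀ r ∈ Icc 1 M,
      (2:ℚ)^((M+1)+r)/(((M+1):ℚ)+r)
        = 2^(M+1) * ((2:ℚ)^r/(r:ℚ)) - 2^(M+1) * ((((M+1)):ℚ) * (2^r/((r:ℚ) * ((((M+1)):ℚ)+r)))) := by
    intro r hr
    obtain ⟨hr1, hr2⟩ := Finset.mem_Icc.mp hr
    have hrQ : (r:ℚ) ≠ 0 := Nat.cast_ne_zero.mpr (by omega)
    have hNr : ((((M+1)):ℚ)+r) ≠ 0 := by positivity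
    rw [pow_add]
    field_simp
    ring
  have splitsum : ∑ r ∈ Icc 1 M, (2:ℚ)^((M+1)+r)/(((M+1):ℚ)+r)
      = 2^(M+1) * (∑ r ∈ Icc 1 M, (2:ℚ)^r/(r:ℚ))
        - 2^(M+1) * ((((M+1)):ℚ) * (∑ r ∈ Icc 1 M, 2^r/((r:ℚ) * ((((M+1)):ℚ)+r)))) := by
    rw [Finset.sum_congr rfl per, Finset.sum_sub_distrib, ← Finset.mul_sum, ← Finset.mul_sum,
      ← Finset.mul_sum]
  have top : (2:ℚ)^((M+1)+(M+1))/(((M+1):ℚ)+((M+1):ℚ)) = 2^(M+1) * (2^M/(((M+1)):ℚ)) := by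
    have hNQ : (((M+1)):ℚ) ≠ 0 := by positivity
    have e4 : (M+1) + (M+1) = (M+1) + M + 1 := by omega
    rw [e4, pow_add, pow_add]
    field_simp
    ring
  rw [splitsum]
  push_cast
  rw [top]
  ring



lemma pow_big (e : ℕ) (he : 3 ≤ e) : 2*e+1 ≤ 2^e := by
  induction e, he using Nat.le_induction with
  | base => norm_num
  | succ n hn ih => rw [pow_succ]; omega

lemma f_pos (n : ℕ) : 0 < f n := by
  rw [f]
  apply Finset.sum_pos'
  · intro i _
    positivity
  · exact ⟨0, Finset.mem_range.mpr (by omega), by simp⟩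

theorem stmt_8 (e : ℕ) (he : 3 ≤ e) :
    (2 * e : ℤ) ≤ padicValRat 2 (f (2 ^ e - 1)) := by
  have hNe : 2*e+1 ≤ 2^e := pow_big e he
  have hN1 : 1 ≤ 2^e := by omega
  set N := 2^e with hNdef
  have hNQ : (N:ℚ) ≠ 0 := Nat.cast_ne_zero.mpr (by omega)
  have hvalN : padicValRat 2 ((N:ℚ)) = e := by
    rw [show ((N:ℕ):ℚ) = (2:ℚ)^e by push_cast [hNdef]; ring, val_two_pow]
  -- bound on S N
  have hb1 : vb ((N:ℤ)+1-e) (S N) := by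
    have h2 : 2 * 2^(e-1) = N := by
      rw [hNdef, ← pow_succ']
      congr 1
      omega
    have hb := star_bound (2^(e-1)) (e+1) Nat.one_le_two_pow (by rw [h2]; rw [hNdef]; omega)
    rw [h2] at hb
    have hcast : 2*((2:ℤ)^(e-1):ℤ) + 2 - (e+1) = (N:ℤ)+1-e := by
      have : 2*(2:ℤ)^(e-1) = (N:ℤ) := by
        rw [← pow_succ']
        rw [show e - 1 + 1 = e by omega]
        push_cast [hNdef]
        ring
      omega
    push_cast at hb
    rwa [hcast] at hb
  -- bound on S (2N)
  have hb2 : vb (2*(N:ℤ)-e) (S (2*N)) := by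
    have hb := star_bound N (e+2) (by omega) (by rw [hNdef]; rw [show 2^(e+2) = 2*2*2^e by ring]; omega)
    push_cast at hb
    have h3 : 2*(N:ℤ) + 2 - ((e:ℤ)+2) = 2*(N:ℤ)-e := by omega
    rwa [h3] at hb
  -- bound on S (N-1)
  have hval2N : padicValRat 2 ((2:ℚ)^N/(N:ℚ)) = (N:ℤ) - e := by
    rw [padicValRat.div (by positivity) hNQ, val_two_pow, hvalN]
  have hb3 : vb ((N:ℤ)-e) (S (N-1)) := by
    have hS : S (N-1) = S N - 2^N/(N:ℚ) := by rw [S_top N (by omega)]; ring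
    rw [hS]
    exact vb_sub (vb_mono hb1 (by omega)) (Or.inr (le_of_eq hval2N.symm))
  -- bound on X
  have hbX : vb 0 (∑ r ∈ Icc 1 (N-1), (2:ℚ)^r/((r:ℚ) * ((N:ℚ)+r))) := by
    apply vb_sum
    intro r hr
    obtain ⟨hr1, hr2⟩ := Finset.mem_Icc.mp hr
    have hrQ : (r:ℚ) ≠ 0 := Nat.cast_ne_zero.mpr (by omega)
    have hNrQ : ((N:ℚ)+r) ≠ 0 := by positivity
    right
    have hvr : padicValRat 2 ((r:ℚ)) = padicValNat 2 r := val_nat_cast r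
    have hvNr : padicValRat 2 ((N:ℚ)+(r:ℚ)) = padicValNat 2 r := by
      rw [show (N:ℚ)+(r:ℚ) = (r:ℚ)+(N:ℚ) by ring]
      rw [padicValRat.add_eq_of_lt (p := 2) (by positivity) hrQ hNQ ?_, hvr]
      rw [hvr, hvalN]
      have : padicValNat 2 r < e := padicValNat_lt_of_lt (by omega) (by omega)
      exact_mod_cast this
    rw [padicValRat.div (by positivity) (mul_ne_zero hrQ hNrQ),
      padicValRat.mul hrQ hNrQ, val_two_pow, hvr, hvNr]
    have h2v : 2 * padicValNat 2 r ≤ r := two_mul_val_le (by omega)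
    have h2v' : 2 * (padicValNat 2 r : ℤ) ≤ (r:ℤ) := by exact_mod_cast h2v
    omega
  -- bound on half tail
  have hbHT : vb ((N:ℤ)+e) (∑ j ∈ Icc (N+1) (2*N), (2:ℚ)^j/(j:ℚ)) := by
    rw [half_tail N (by omega)]
    have hbB : vb (e:ℤ) (S (N-1) - (N:ℚ) * (∑ r ∈ Icc 1 (N-1), (2:ℚ)^r/((r:ℚ) * ((N:ℚ)+r)))
        + 2^(N-1)/(N:ℚ)) := by
      apply vb_add
      apply vb_sub
      · exact vb_mono hb3 (by omega)
      · have := vb_mul_val hbX hNQ hvalN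
        rw [mul_comm] at this
        exact vb_mono this (by omega)
      · refine Or.inr ?_
        rw [padicValRat.div (by positivity) hNQ, val_two_pow, hvalN]
        have : (1:ℤ) ≤ (N:ℤ) := by exact_mod_cast hN1
        have hNeZ : (2*(e:ℤ)+1) ≤ (N:ℤ) := by exact_mod_cast hNe
        omega
    have := vb_mul_val hbB (by positivity : ((2:ℚ)^N) ≠ 0) (val_two_pow N)
    rw [mul_comm] at this
    exact vb_mono this (by omega)
  -- S N = S 2N - half tail
  have hsplit : S N = S (2*N) - ∑ j ∈ Icc (N+1) (2*N), (2:ℚ)^j/(j:ℚ) := by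
    have h : S (2*N) = S N + ∑ j ∈ Icc (N+1) (2*N), (2:ℚ)^j/(j:ℚ) := by
      rw [S, S, ← Finset.Ico_add_one_right_eq_Icc, ← Finset.Ico_add_one_right_eq_Icc (N+1),
        ← Finset.sum_Ico_consecutive _ (by omega : 1 ≤ N+1) (by omega : N+1 ≤ 2*N+1),
        Finset.Ico_add_one_right_eq_Icc]
    rw [h]; ring
  have hbSN : vb ((N:ℤ)+e) (S N) := by
    rw [hsplit]
    have hNeZ : (2*(e:ℤ)+1) ≤ (N:ℤ) := by exact_mod_cast hNe
    exact vb_sub (vb_mono hb2 (by omega)) hbHT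
  -- final
  have hfe : f (2^e - 1) = (N:ℚ)/2^N * S N := by
    have h := f_eq_S (2^e - 1)
    rw [show 2^e - 1 + 1 = N by omega] at h
    rw [h]
    congr 2
    push_cast [Nat.cast_sub (show 1 ≤ 2^e from hN1), hNdef]
    ring
  have hfne : f (2^e - 1) ≠ 0 := ne_of_gt (f_pos _)
  have hSNne : S N ≠ 0 := by
    intro h0
    apply hfne
    rw [hfe, h0, mul_zero]
  have hvSN : (N:ℤ)+e ≤ padicValRat 2 (S N) := hbSN.resolve_left hSNne
  rw [hfe, padicValRat.mul (by positivity) hSNne,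
    padicValRat.div hNQ (by positivity), val_two_pow, hvalN]
  have hNeZ : (2*(e:ℤ)+1) ≤ (N:ℤ) := by exact_mod_cast hNe
  omega
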